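/- Under the transverse-coordinate setup (arc-length frame path p_f twice differentiable near s₀ := s_f(t₀), ‖p_f'‖ ≡ 1, k ≠ 0 near s₀, n differentiable at s₀; p differentiable at t₀ with v(t₀) := p'(t₀); s_f differentiable at t₀; transversality ⟪t(s_f(t)), p(t) − p_f(s_f(t))⟫ = 0 near t₀), assume additionally that w̄₁, w̄₂ : ℝ → ℝ are differentiable at s₀ and satisfy w̄₁(s_f(t)) = w₁(t) and w̄₂(s_f(t)) = w₂(t) for all t near t₀, that ⟪t(s₀), v(t₀)⟫ ≠ 0 and 1 − k(s₀) w̄₁(s₀) ≠ 0. Then the spatial transverse dynamics hold: w̄₁'(s₀) = ⟪n(s₀), v(t₀)⟫ · (1 − k(s₀) w̄₁(s₀)) / ⟪t(s₀), v(t₀)⟫ + τ(s₀) w̄₂(s₀) and w̄₂'(s₀) = ⟪b(s₀), v(t₀)⟫ · (1 − k(s₀) w̄₁(s₀)) / ⟪t(s₀), v(t₀)⟫ − τ(s₀) w̄₁(s₀). -/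

import Mathlib

open scoped RealInnerProductSpace Matrix

/-- Cross product on `EuclideanSpace ℝ (Fin 3)`. -/
noncomputable def cross3 (u v : EuclideanSpace ℝ (Fin 3)) : EuclideanSpace ℝ (Fin 3) :=
  (WithLp.equiv 2 (Fin 3 → ℝ)).symm
    ![u 1 * v 2 - u 2 * v 1, u 2 * v 0 - u 0 * v 2, u 0 * v 1 - u 1 * v 0]

/-- Tangent vector of an arc-length parameterized curve. -/
noncomputable def tang (p_f : ℝ → EuclideanSpace ℝ (Fin 3)) (s : ℝ) : EuclideanSpace ℝ (Fin 3) :=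
  deriv p_f s

/-- Curvature. -/
noncomputable def curv (p_f : ℝ → EuclideanSpace ℝ (Fin 3)) (s : ℝ) : ℝ :=
  ‖deriv (deriv p_f) s‖

/-- Normal vector. -/
noncomputable def nor (p_f : ℝ → EuclideanSpace ℝ (Fin 3)) (s : ℝ) : EuclideanSpace ℝ (Fin 3) :=
  (curv p_f s)⁻¹ • deriv (deriv p_f) s

/-- Binormal vector. -/
noncomputable def binor (p_f : ℝ → EuclideanSpace ℝ (Fin 3)) (s : ℝ) : EuclideanSpace ℝ (Fin 3) :=
  cross3 (tang p_f s) (nor p_f s)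

/-- Torsion: `τ(s) = ⟪b(s), n'(s)⟫`. -/
noncomputable def tors (p_f : ℝ → EuclideanSpace ℝ (Fin 3)) (s : ℝ) : ℝ :=
  ⟪binor p_f s, deriv (nor p_f) s⟫

/-- First transverse coordinate `w₁(t) = ⟪n(s_f(t)), p(t) − p_f(s_f(t))⟫`. -/
noncomputable def w1 (p_f p : ℝ → EuclideanSpace ℝ (Fin 3)) (s_f : ℝ → ℝ) (t : ℝ) : ℝ :=
  ⟪nor p_f (s_f t), p t - p_f (s_f t)⟫

/-- Second transverse coordinate `w₂(t) = ⟪b(s_f(t)), p(t) − p_f(s_f(t))⟫`. -/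
noncomputable def w2 (p_f p : ℝ → EuclideanSpace ℝ (Fin 3)) (s_f : ℝ → ℝ) (t : ℝ) : ℝ :=
  ⟪binor p_f (s_f t), p t - p_f (s_f t)⟫

section Aux

local notation "E3" => EuclideanSpace ℝ (Fin 3)

private lemma inner3 (x y : E3) : ⟪x, y⟫ = x 0 * y 0 + x 1 * y 1 + x 2 * y 2 := by
  simp [PiLp.inner_apply, RCLike.inner_apply, Fin.sum_univ_three, mul_comm]

private lemma cross3_apply (u v : E3) (i : Fin 3) :
    cross3 u v i = ![u 1 * v 2 - u 2 * v 1, u 2 * v 0 - u 0 * v 2, u 0 * v 1 - u 1 * v 0] i := by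
  simp [cross3]

private lemma inner_cross_left (u v : E3) : ⟪cross3 u v, u⟫ = 0 := by
  simp [inner3, cross3_apply, Fin.sum_univ_three]; ring

private lemma inner_cross_right (u v : E3) : ⟪cross3 u v, v⟫ = 0 := by
  simp [inner3, cross3_apply, Fin.sum_univ_three]; ring

private lemma inner_cross_self (u v : E3) :
    ⟪cross3 u v, cross3 u v⟫ = ⟪u, u⟫ * ⟪v, v⟫ - ⟪u, v⟫ ^ 2 := by
  simp only [inner3]; simp [cross3_apply, Fin.sum_univ_three]; ring

private lemma cross3_triple (a c d : E3) :
    cross3 a (cross3 c d) = ⟪a, d⟫ • c - ⟪a, c⟫ • d := by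
  ext i
  fin_cases i <;>
    simp [inner3, cross3_apply, Fin.sum_univ_three, PiLp.sub_apply, PiLp.smul_apply,
      smul_eq_mul] <;> ring

private lemma cross3_anticomm (a b : E3) : cross3 a b = -cross3 b a := by
  ext i
  fin_cases i <;>
    simp [cross3_apply, PiLp.neg_apply] <;> ring

/-- Decomposition of a vector orthogonal to `u` in the orthonormal frame `u, v, u × v`. -/
private lemma decomp3 (u v x : E3) (hu : ⟪u, u⟫ = 1) (hv : ⟪v, v⟫ = 1)
    (huv : ⟪u, v⟫ = 0) (hx : ⟪u, x⟫ = 0) :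
    x = ⟪v, x⟫ • v + ⟪cross3 u v, x⟫ • cross3 u v := by
  set b := cross3 u v with hb
  set y := x - ⟪v, x⟫ • v with hy
  have hbb : ⟪b, b⟫ = 1 := by rw [hb, inner_cross_self, hu, hv, huv]; ring
  have huy : ⟪u, y⟫ = 0 := by
    rw [hy, inner_sub_right, real_inner_smul_right, hx, huv]; ring
  have hvy : ⟪v, y⟫ = 0 := by
    rw [hy, inner_sub_right, real_inner_smul_right, hv]; ring
  have hvy' : ⟪y, v⟫ = 0 := by rw [real_inner_comm]; exact hvy
  have huy' : ⟪y, u⟫ = 0 := by rw [real_inner_comm]; exact huy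
  have hby0 : cross3 b y = 0 := by
    rw [hb, cross3_anticomm (cross3 u v) y, cross3_triple, hvy', huy']
    simp
  have h2 : cross3 b (cross3 b y) = ⟪b, y⟫ • b - ⟪b, b⟫ • y := cross3_triple b b y
  have hz : cross3 b (0 : E3) = 0 := by
    ext i; fin_cases i <;> simp [cross3_apply]
  rw [hby0, hz, hbb, one_smul] at h2
  have hy2 : y = ⟪b, y⟫ • b := (sub_eq_zero.mp h2.symm).symm
  have hbyx : ⟪b, y⟫ = ⟪b, x⟫ := by
    rw [hy, inner_sub_right, real_inner_smul_right, hb, inner_cross_right]; ring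
  rw [hbyx] at hy2
  calc x = ⟪v, x⟫ • v + (x - ⟪v, x⟫ • v) := by abel
    _ = ⟪v, x⟫ • v + ⟪b, x⟫ • b := by rw [← hy, hy2]

private lemma hasDerivAt_comp_e {f : ℝ → E3} {f' : E3} {x : ℝ} (h : HasDerivAt f f' x)
    (i : Fin 3) : HasDerivAt (fun t => f t i) (f' i) x := by
  have h1 : HasDerivAt (fun t => (EuclideanSpace.equiv (Fin 3) ℝ) (f t))
      ((EuclideanSpace.equiv (Fin 3) ℝ) f') x :=
    ((EuclideanSpace.equiv (Fin 3) ℝ).toContinuousLinearMap.hasFDerivAt).comp_hasDerivAt x h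
  exact hasDerivAt_pi.1 h1 i

private lemma hasDerivAt_of_comp {f : ℝ → E3} {f' : E3} {x : ℝ}
    (h : ∀ i, HasDerivAt (fun t => f t i) (f' i) x) : HasDerivAt f f' x := by
  have h1 : HasDerivAt (fun t => (EuclideanSpace.equiv (Fin 3) ℝ) (f t))
      ((EuclideanSpace.equiv (Fin 3) ℝ) f') x := hasDerivAt_pi.2 h
  have h2 := ((EuclideanSpace.equiv (Fin 3) ℝ).symm.toContinuousLinearMap.hasFDerivAt).comp_hasDerivAt
    x h1
  simpa [Function.comp_def] using h2

private lemma hasDerivAt_cross3 {u v : ℝ → E3} {u' v' : E3} {x : ℝ}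
    (hu : HasDerivAt u u' x) (hv : HasDerivAt v v' x) :
    HasDerivAt (fun s => cross3 (u s) (v s)) (cross3 u' (v x) + cross3 (u x) v') x := by
  apply hasDerivAt_of_comp
  intro i
  have A : ∀ j, HasDerivAt (fun t => u t j) (u' j) x := hasDerivAt_comp_e hu
  have B : ∀ j, HasDerivAt (fun t => v t j) (v' j) x := hasDerivAt_comp_e hv
  have key : ∀ (j k l m : Fin 3), HasDerivAt (fun t => u t j * v t k - u t l * v t m)
      (u' j * v x k + u x j * v' k - (u' l * v x m + u x l * v' m)) x := fun j k l m =>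
    (((A j).mul (B k)).sub ((A l).mul (B m)))
  have hsimp : ∀ t, cross3 (u t) (v t) i =
      ![u t 1 * v t 2 - u t 2 * v t 1, u t 2 * v t 0 - u t 0 * v t 2,
        u t 0 * v t 1 - u t 1 * v t 0] i := fun t => cross3_apply _ _ i
  simp only [hsimp]
  have hval : (cross3 u' (v x) + cross3 (u x) v') i =
      ![u' 1 * v x 2 - u' 2 * v x 1, u' 2 * v x 0 - u' 0 * v x 2,
        u' 0 * v x 1 - u' 1 * v x 0] i +
      ![u x 1 * v' 2 - u x 2 * v' 1, u x 2 * v' 0 - u x 0 * v' 2,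
        u x 0 * v' 1 - u x 1 * v' 0] i := by
    simp [PiLp.add_apply, cross3_apply]
  rw [hval]
  obtain rfl | rfl | rfl : i = 0 ∨ i = 1 ∨ i = 2 := by fin_cases i <;> simp
  · convert key 1 2 2 1 using 1
    · simp [Matrix.cons_val_zero, Matrix.cons_val_one, Matrix.head_cons]
    change (_ + _ : ℝ) = _
    simp [Matrix.cons_val_zero, Matrix.cons_val_one, Matrix.head_cons]
    ring
  · convert key 2 0 0 2 using 1
    · simp [Matrix.cons_val_zero, Matrix.cons_val_one, Matrix.head_cons]
    change (_ + _ : ℝ) = _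
    simp [Matrix.cons_val_zero, Matrix.cons_val_one, Matrix.head_cons]
    ring
  · convert key 0 1 1 0 using 1
    · simp [Matrix.cons_val_zero, Matrix.cons_val_one, Matrix.head_cons]
    change (_ + _ : ℝ) = _
    simp [Matrix.cons_val_zero, Matrix.cons_val_one, Matrix.head_cons]
    ring

end Aux

theorem spatial_transverse_dynamics
    (p_f p : ℝ → EuclideanSpace ℝ (Fin 3)) (s_f wb1 wb2 : ℝ → ℝ) (t₀ : ℝ)
    (hd1 : ∀ᶠ s in nhds (s_f t₀), DifferentiableAt ℝ p_f s)
    (hd2 : ∀ᶠ s in nhds (s_f t₀), DifferentiableAt ℝ (deriv p_f) s)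
    (hunit : ∀ s : ℝ, ‖deriv p_f s‖ = 1)
    (hk : ∀ᶠ s in nhds (s_f t₀), curv p_f s ≠ 0)
    (hn : DifferentiableAt ℝ (nor p_f) (s_f t₀))
    (hp : DifferentiableAt ℝ p t₀)
    (hsf : DifferentiableAt ℝ s_f t₀)
    (htrans : ∀ᶠ t in nhds t₀, ⟪tang p_f (s_f t), p t - p_f (s_f t)⟫ = 0)
    (hwb1 : DifferentiableAt ℝ wb1 (s_f t₀))
    (hwb2 : DifferentiableAt ℝ wb2 (s_f t₀))
    (hcomp1 : ∀ᶠ t in nhds t₀, wb1 (s_f t) = w1 p_f p s_f t)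
    (hcomp2 : ∀ᶠ t in nhds t₀, wb2 (s_f t) = w2 p_f p s_f t)
    (hvt : ⟪tang p_f (s_f t₀), deriv p t₀⟫ ≠ 0)
    (hden : 1 - curv p_f (s_f t₀) * wb1 (s_f t₀) ≠ 0) :
    deriv wb1 (s_f t₀) =
        ⟪nor p_f (s_f t₀), deriv p t₀⟫ * (1 - curv p_f (s_f t₀) * wb1 (s_f t₀)) /
            ⟪tang p_f (s_f t₀), deriv p t₀⟫ +
          tors p_f (s_f t₀) * wb2 (s_f t₀) ∧
      deriv wb2 (s_f t₀) =
        ⟪binor p_f (s_f t₀), deriv p t₀⟫ * (1 - curv p_f (s_f t₀) * wb1 (s_f t₀)) /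
            ⟪tang p_f (s_f t₀), deriv p t₀⟫ -
          tors p_f (s_f t₀) * wb1 (s_f t₀) := by
  have hdT : DifferentiableAt ℝ (deriv p_f) (s_f t₀) := hd2.self_of_nhds
  -- basic `HasDerivAt` facts at `S := s_f t₀`
  have hTd : HasDerivAt (tang p_f) (deriv (deriv p_f) (s_f t₀)) (s_f t₀) := hdT.hasDerivAt
  have hpfd : HasDerivAt p_f (tang p_f (s_f t₀)) (s_f t₀) := hd1.self_of_nhds.hasDerivAt
  have hnd : HasDerivAt (nor p_f) (deriv (nor p_f) (s_f t₀)) (s_f t₀) := hn.hasDerivAt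
  have hBd : HasDerivAt (binor p_f)
      (cross3 (deriv (deriv p_f) (s_f t₀)) (nor p_f (s_f t₀)) +
        cross3 (tang p_f (s_f t₀)) (deriv (nor p_f) (s_f t₀))) (s_f t₀) :=
    hasDerivAt_cross3 hTd hnd
  -- pointwise unit tangent
  have hunit' : ∀ s, ⟪tang p_f s, tang p_f s⟫ = 1 := by
    intro s
    rw [show tang p_f s = deriv p_f s from rfl, real_inner_self_eq_norm_sq, hunit s]
    norm_num
  -- ⟪t, t'⟫ = 0 wherever t is differentiable
  have hTT' : ∀ s, DifferentiableAt ℝ (deriv p_f) s →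
      ⟪tang p_f s, deriv (deriv p_f) s⟫ = 0 := by
    intro s hs
    have h1 : HasDerivAt (fun r => ⟪tang p_f r, tang p_f r⟫)
        (⟪tang p_f s, deriv (deriv p_f) s⟫ + ⟪deriv (deriv p_f) s, tang p_f s⟫) s :=
      (hs.hasDerivAt : HasDerivAt (tang p_f) _ s).inner ℝ hs.hasDerivAt
    have h2 : (fun r => ⟪tang p_f r, tang p_f r⟫) = fun _ => (1 : ℝ) := funext hunit'
    have h3 := h1.deriv
    rw [h2, deriv_const] at h3
    have h4 := real_inner_comm (tang p_f s) (deriv (deriv p_f) s)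
    linarith [h3, h4]
  -- eventual orthonormality near S
  have horth : ∀ᶠ s in nhds (s_f t₀),
      ⟪tang p_f s, nor p_f s⟫ = 0 ∧ ⟪nor p_f s, nor p_f s⟫ = 1 := by
    filter_upwards [hd2, hk] with s hs hks
    have hTt := hTT' s hs
    constructor
    · rw [show nor p_f s = (curv p_f s)⁻¹ • deriv (deriv p_f) s from rfl,
        real_inner_smul_right, hTt]
      ring
    · rw [show nor p_f s = (curv p_f s)⁻¹ • deriv (deriv p_f) s from rfl,
        real_inner_smul_right, real_inner_smul_left]
      have : ⟪deriv (deriv p_f) s, deriv (deriv p_f) s⟫ = (curv p_f s) ^ 2 :=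
        real_inner_self_eq_norm_sq _
      rw [this]
      field_simp
  have hTN0 : ⟪tang p_f (s_f t₀), nor p_f (s_f t₀)⟫ = 0 := horth.self_of_nhds.1
  have hNN1 : ⟪nor p_f (s_f t₀), nor p_f (s_f t₀)⟫ = 1 := horth.self_of_nhds.2
  have hBN0 : ∀ s, ⟪binor p_f s, nor p_f s⟫ = 0 := fun s => inner_cross_right _ _
  have hBT0 : ∀ s, ⟪binor p_f s, tang p_f s⟫ = 0 := fun s => inner_cross_left _ _
  have hBB1 : ∀ᶠ s in nhds (s_f t₀), ⟪binor p_f s, binor p_f s⟫ = 1 := by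
    filter_upwards [horth] with s hs
    rw [show binor p_f s = cross3 (tang p_f s) (nor p_f s) from rfl, inner_cross_self,
      hunit' s, hs.1, hs.2]
    ring
  -- derivative orthogonality relations at S
  have hNN'0 : ⟪nor p_f (s_f t₀), deriv (nor p_f) (s_f t₀)⟫ = 0 := by
    have h1 := (hnd.inner ℝ hnd).deriv
    have h2 : deriv (fun s => ⟪nor p_f s, nor p_f s⟫) (s_f t₀) =
        deriv (fun _ => (1 : ℝ)) (s_f t₀) := by
      apply Filter.EventuallyEq.deriv_eq
      filter_upwards [horth] with s hs using hs.2
    rw [h2, deriv_const] at h1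
    have h4 := real_inner_comm (nor p_f (s_f t₀)) (deriv (nor p_f) (s_f t₀))
    linarith [h1, h4]
  have hBB'0 : ⟪binor p_f (s_f t₀),
      cross3 (deriv (deriv p_f) (s_f t₀)) (nor p_f (s_f t₀)) +
        cross3 (tang p_f (s_f t₀)) (deriv (nor p_f) (s_f t₀))⟫ = 0 := by
    have h1 := (hBd.inner ℝ hBd).deriv
    have h2 : deriv (fun s => ⟪binor p_f s, binor p_f s⟫) (s_f t₀) =
        deriv (fun _ => (1 : ℝ)) (s_f t₀) := by
      apply Filter.EventuallyEq.deriv_eq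
      filter_upwards [hBB1] with s hs using hs
    rw [h2, deriv_const] at h1
    have h4 := real_inner_comm (binor p_f (s_f t₀))
      (cross3 (deriv (deriv p_f) (s_f t₀)) (nor p_f (s_f t₀)) +
        cross3 (tang p_f (s_f t₀)) (deriv (nor p_f) (s_f t₀)))
    linarith [h1, h4]
  have hB'N : ⟪cross3 (deriv (deriv p_f) (s_f t₀)) (nor p_f (s_f t₀)) +
        cross3 (tang p_f (s_f t₀)) (deriv (nor p_f) (s_f t₀)), nor p_f (s_f t₀)⟫ =
      -tors p_f (s_f t₀) := by
    have h1 := (hBd.inner ℝ hnd).deriv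
    have h2 : deriv (fun s => ⟪binor p_f s, nor p_f s⟫) (s_f t₀) =
        deriv (fun _ => (0 : ℝ)) (s_f t₀) := by
      apply Filter.EventuallyEq.deriv_eq
      filter_upwards with s using hBN0 s
    rw [h2, deriv_const] at h1
    have hτ : tors p_f (s_f t₀) = ⟪binor p_f (s_f t₀), deriv (nor p_f) (s_f t₀)⟫ := rfl
    linarith [h1, hτ]
  -- T' = k • N
  have hkS : curv p_f (s_f t₀) ≠ 0 := hk.self_of_nhds
  have hT'N : deriv (deriv p_f) (s_f t₀) = curv p_f (s_f t₀) • nor p_f (s_f t₀) := by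
    rw [show nor p_f (s_f t₀) = (curv p_f (s_f t₀))⁻¹ • deriv (deriv p_f) (s_f t₀) from rfl,
      smul_smul, mul_inv_cancel₀ hkS, one_smul]
  -- decomposition of X
  have hTX : ⟪tang p_f (s_f t₀), p t₀ - p_f (s_f t₀)⟫ = 0 := htrans.self_of_nhds
  have hW1 : ⟪nor p_f (s_f t₀), p t₀ - p_f (s_f t₀)⟫ = wb1 (s_f t₀) :=
    (hcomp1.self_of_nhds).symm
  have hW2 : ⟪binor p_f (s_f t₀), p t₀ - p_f (s_f t₀)⟫ = wb2 (s_f t₀) :=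
    (hcomp2.self_of_nhds).symm
  have hdecomp : p t₀ - p_f (s_f t₀) =
      wb1 (s_f t₀) • nor p_f (s_f t₀) + wb2 (s_f t₀) • binor p_f (s_f t₀) := by
    have h := decomp3 (tang p_f (s_f t₀)) (nor p_f (s_f t₀)) (p t₀ - p_f (s_f t₀))
      (hunit' _) hNN1 hTN0 hTX
    rw [show cross3 (tang p_f (s_f t₀)) (nor p_f (s_f t₀)) = binor p_f (s_f t₀) from rfl]
      at h
    rw [hW1, hW2] at h
    exact h
  -- inner products of derivatives with X
  have e1 : ⟪deriv (nor p_f) (s_f t₀), nor p_f (s_f t₀)⟫ = 0 := by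
    rw [real_inner_comm]; exact hNN'0
  have e2 : ⟪deriv (nor p_f) (s_f t₀), binor p_f (s_f t₀)⟫ = tors p_f (s_f t₀) := by
    rw [real_inner_comm]; rfl
  have hN'X : ⟪deriv (nor p_f) (s_f t₀), p t₀ - p_f (s_f t₀)⟫ =
      tors p_f (s_f t₀) * wb2 (s_f t₀) := by
    rw [hdecomp, inner_add_right, real_inner_smul_right, real_inner_smul_right, e1, e2]
    ring
  have hB'X : ⟪cross3 (deriv (deriv p_f) (s_f t₀)) (nor p_f (s_f t₀)) +
        cross3 (tang p_f (s_f t₀)) (deriv (nor p_f) (s_f t₀)), p t₀ - p_f (s_f t₀)⟫ =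
      -(tors p_f (s_f t₀) * wb1 (s_f t₀)) := by
    have e3 : ⟪cross3 (deriv (deriv p_f) (s_f t₀)) (nor p_f (s_f t₀)) +
        cross3 (tang p_f (s_f t₀)) (deriv (nor p_f) (s_f t₀)), binor p_f (s_f t₀)⟫ = 0 := by
      rw [real_inner_comm]; exact hBB'0
    rw [hdecomp, inner_add_right, real_inner_smul_right, real_inner_smul_right, hB'N, e3]
    ring
  -- derivatives at t₀
  have hsfd : HasDerivAt s_f (deriv s_f t₀) t₀ := hsf.hasDerivAt
  have hTc : HasDerivAt (fun t => tang p_f (s_f t))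
      (deriv s_f t₀ • deriv (deriv p_f) (s_f t₀)) t₀ := hTd.scomp t₀ hsfd
  have hpfc : HasDerivAt (fun t => p_f (s_f t)) (deriv s_f t₀ • tang p_f (s_f t₀)) t₀ :=
    hpfd.scomp t₀ hsfd
  have hNc : HasDerivAt (fun t => nor p_f (s_f t))
      (deriv s_f t₀ • deriv (nor p_f) (s_f t₀)) t₀ := hnd.scomp t₀ hsfd
  have hBc : HasDerivAt (fun t => binor p_f (s_f t))
      (deriv s_f t₀ • (cross3 (deriv (deriv p_f) (s_f t₀)) (nor p_f (s_f t₀)) +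
        cross3 (tang p_f (s_f t₀)) (deriv (nor p_f) (s_f t₀)))) t₀ := hBd.scomp t₀ hsfd
  have hXc : HasDerivAt (fun t => p t - p_f (s_f t))
      (deriv p t₀ - deriv s_f t₀ • tang p_f (s_f t₀)) t₀ := hp.hasDerivAt.sub hpfc
  -- equation A : σ (1 - k w̄₁) = ⟪T, v⟫
  have hgd := (hTc.inner ℝ hXc).deriv
  have hg0 : deriv (fun t => ⟪tang p_f (s_f t), p t - p_f (s_f t)⟫) t₀ = 0 := by
    have h : (fun t => ⟪tang p_f (s_f t), p t - p_f (s_f t)⟫) =ᶠ[nhds t₀]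
        (fun _ => (0 : ℝ)) := htrans
    rw [h.deriv_eq, deriv_const]
  rw [hg0] at hgd
  rw [inner_sub_right, real_inner_smul_right, real_inner_smul_left, hunit' (s_f t₀),
    hT'N, real_inner_smul_left, hW1] at hgd
  have eqA : deriv s_f t₀ * (1 - curv p_f (s_f t₀) * wb1 (s_f t₀)) =
      ⟪tang p_f (s_f t₀), deriv p t₀⟫ := by linarith [hgd]
  have hσ0 : deriv s_f t₀ ≠ 0 := by
    intro h
    apply hvt
    rw [← eqA, h, zero_mul]
  -- equation B
  have hw1d : HasDerivAt (w1 p_f p s_f)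
      (⟪nor p_f (s_f t₀), deriv p t₀ - deriv s_f t₀ • tang p_f (s_f t₀)⟫ +
        ⟪deriv s_f t₀ • deriv (nor p_f) (s_f t₀), p t₀ - p_f (s_f t₀)⟫) t₀ :=
    hNc.inner ℝ hXc
  have hchain1 : deriv (w1 p_f p s_f) t₀ = deriv wb1 (s_f t₀) * deriv s_f t₀ := by
    have he : w1 p_f p s_f =ᶠ[nhds t₀] fun t => wb1 (s_f t) := by
      filter_upwards [hcomp1] with t ht using ht.symm
    rw [he.deriv_eq]
    exact (hwb1.hasDerivAt.comp t₀ hsfd).deriv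
  have eqB : deriv wb1 (s_f t₀) * deriv s_f t₀ =
      ⟪nor p_f (s_f t₀), deriv p t₀⟫ +
        deriv s_f t₀ * (tors p_f (s_f t₀) * wb2 (s_f t₀)) := by
    have h := hw1d.deriv
    rw [hchain1] at h
    rw [inner_sub_right, real_inner_smul_right, real_inner_smul_left, hN'X] at h
    have e4 : ⟪nor p_f (s_f t₀), tang p_f (s_f t₀)⟫ = 0 := by
      rw [real_inner_comm]; exact hTN0
    rw [e4] at h
    linarith [h]
  -- equation C
  have hw2d : HasDerivAt (w2 p_f p s_f)
      (⟪binor p_f (s_f t₀), deriv p t₀ - deriv s_f t₀ • tang p_f (s_f t₀)⟫ +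
        ⟪deriv s_f t₀ • (cross3 (deriv (deriv p_f) (s_f t₀)) (nor p_f (s_f t₀)) +
          cross3 (tang p_f (s_f t₀)) (deriv (nor p_f) (s_f t₀))),
          p t₀ - p_f (s_f t₀)⟫) t₀ :=
    hBc.inner ℝ hXc
  have hchain2 : deriv (w2 p_f p s_f) t₀ = deriv wb2 (s_f t₀) * deriv s_f t₀ := by
    have he : w2 p_f p s_f =ᶠ[nhds t₀] fun t => wb2 (s_f t) := by
      filter_upwards [hcomp2] with t ht using ht.symm
    rw [he.deriv_eq]
    exact (hwb2.hasDerivAt.comp t₀ hsfd).deriv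
  have eqC : deriv wb2 (s_f t₀) * deriv s_f t₀ =
      ⟪binor p_f (s_f t₀), deriv p t₀⟫ -
        deriv s_f t₀ * (tors p_f (s_f t₀) * wb1 (s_f t₀)) := by
    have h := hw2d.deriv
    rw [hchain2] at h
    rw [inner_sub_right, real_inner_smul_right, real_inner_smul_left, hBT0, hB'X] at h
    linarith [h]
  -- final algebra
  set K := curv p_f (s_f t₀) with hK
  set TAU := tors p_f (s_f t₀) with hTAU
  set W1 := wb1 (s_f t₀) with hW1'
  set W2 := wb2 (s_f t₀) with hW2'
  set NV := ⟪nor p_f (s_f t₀), deriv p t₀⟫ with hNV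
  set TV := ⟪tang p_f (s_f t₀), deriv p t₀⟫ with hTV
  set BV := ⟪binor p_f (s_f t₀), deriv p t₀⟫ with hBV
  set SIG := deriv s_f t₀ with hSIG
  set D1 := deriv wb1 (s_f t₀) with hD1
  set D2 := deriv wb2 (s_f t₀) with hD2
  constructor
  · field_simp
    linear_combination (1 - K * W1) * eqB - (D1 - TAU * W2) * eqA
  · field_simp
    linear_combination (1 - K * W1) * eqC - (D2 + TAU * W1) * eqA
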